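/- Let M ∈ {0,1}^{15×6} be the edge-matching incidence matrix of the Petersen graph (rows indexed by edges, columns by perfect matchings, M[e][m] = 1 iff edge e belongs to matching m). Then the only integer points in the convex hull of the 6 columns of M are the columns themselves. -/

import Mathlib

/-- The Petersen graph, presented as the Kneser graph `K(5,2)`: vertices are the
2-element subsets of `Fin 5`, adjacent iff disjoint. -/
def Petersen : SimpleGraph {s : Finset (Fin 5) // s.card = 2} where
  Adj a b := Disjoint a.1 b.1
  symm := ⟨fun a b h => h.symm⟩
  loopless := ⟨fun a h => by
    have h := Finset.disjoint_self_iff_empty _ |>.mp h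
    have h2 := a.2
    rw [h] at h2
    simp at h2⟩

abbrev PV := {s : Finset (Fin 5) // s.card = 2}

instance : DecidableRel Petersen.Adj := fun a b =>
  decidable_of_iff (Disjoint a.1 b.1) Iff.rfl

def pv (a b : Fin 5) (h : ({a, b} : Finset (Fin 5)).card = 2 := by decide) : PV := ⟨{a, b}, h⟩

def ep : Fin 15 → PV × PV :=
  ![(pv 0 1, pv 2 3), (pv 0 1, pv 2 4), (pv 0 1, pv 3 4), (pv 0 2, pv 1 3), (pv 0 2, pv 1 4),
    (pv 0 2, pv 3 4), (pv 0 3, pv 1 2), (pv 0 3, pv 1 4), (pv 0 3, pv 2 4), (pv 0 4, pv 1 2),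
    (pv 0 4, pv 1 3), (pv 0 4, pv 2 3), (pv 1 2, pv 3 4), (pv 1 3, pv 2 4), (pv 1 4, pv 2 3)]

def Sl : Fin 6 → Finset (Fin 15) :=
  ![{0,4,8,10,12}, {0,5,7,9,13}, {1,3,7,11,12}, {1,5,6,10,14}, {2,3,8,9,14}, {2,4,6,11,13}]

def ends (i : Fin 15) : Finset PV := {(ep i).1, (ep i).2}

lemma ep_adj : ∀ i : Fin 15, Petersen.Adj (ep i).1 (ep i).2 := by decide

lemma ep_ex : ∀ a b : PV, Petersen.Adj a b → ∃ i : Fin 15, ep i = (a, b) ∨ ep i = (b, a) := by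
  decide

lemma ends_inj : ∀ i j : Fin 15, ends i = ends j → i = j := by decide

def shareN : Nat → Nat → Bool := fun i j =>
  ((([[true,true,true,false,false,false,false,false,false,false,false,true,false,false,true],
    [true,true,true,false,false,false,false,false,true,false,false,false,false,true,false],
    [true,true,true,false,false,true,false,false,false,false,false,false,true,false,false],
    [false,false,false,true,true,true,false,false,false,false,true,false,false,true,false],
    [false,false,false,true,true,true,false,true,false,false,false,false,false,false,true],
    [false,false,true,true,true,true,false,false,false,false,false,false,true,false,false],
    [false,false,false,false,false,false,true,true,true,true,false,false,true,false,false],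
    [false,false,false,false,true,false,true,true,true,false,false,false,false,false,true],
    [false,true,false,false,false,false,true,true,true,false,false,false,false,true,false],
    [false,false,false,false,false,false,true,false,false,true,true,true,true,false,false],
    [false,false,false,true,false,false,false,false,false,true,true,true,false,true,false],
    [true,false,false,false,false,false,false,false,false,true,true,true,false,false,true],
    [false,false,true,false,false,true,true,false,false,true,false,false,true,false,false],
    [false,true,false,true,false,false,false,false,true,false,true,false,false,true,false],
    [true,false,false,false,true,false,false,true,false,false,false,true,false,false,true]] :
      List (List Bool)).getD i []).getD j true)

lemma shareN_correct : ∀ i j : Fin 15,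
    shareN i.val j.val = !(decide (Disjoint (ends i) (ends j))) := by decide

def chkConcl (a b c d e : Nat) : Bool :=
  ((a == 0) && (b == 4) && (c == 8) && (d == 10) && (e == 12)) ||
  ((a == 0) && (b == 5) && (c == 7) && (d == 9) && (e == 13)) ||
  ((a == 1) && (b == 3) && (c == 7) && (d == 11) && (e == 12)) ||
  ((a == 1) && (b == 5) && (c == 6) && (d == 10) && (e == 14)) ||
  ((a == 2) && (b == 3) && (c == 8) && (d == 9) && (e == 14)) ||
  ((a == 2) && (b == 4) && (c == 6) && (d == 11) && (e == 13))

def chkE (a b c d e : Nat) : Bool :=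
  !(decide (d < e)) || shareN a e || shareN b e || shareN c e || shareN d e || chkConcl a b c d e

def chkD (a b c d : Nat) : Bool :=
  !(decide (c < d)) || shareN a d || shareN b d || shareN c d || (List.range 15).all (chkE a b c d)

def chkC (a b c : Nat) : Bool :=
  !(decide (b < c)) || shareN a c || shareN b c || (List.range 15).all (chkD a b c)

def chkB (a b : Nat) : Bool :=
  !(decide (a < b)) || shareN a b || (List.range 15).all (chkC a b)

def chkA (a : Nat) : Bool := (List.range 15).all (chkB a)

def chk : Bool := (List.range 15).all chkA

set_option maxHeartbeats 1000000 in
lemma chk_true : chk = true := by decide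

lemma CLS5 : ∀ a b c d e : Fin 15, a < b → b < c → c < d → d < e →
    Disjoint (ends a) (ends b) → Disjoint (ends a) (ends c) →
    Disjoint (ends a) (ends d) → Disjoint (ends a) (ends e) →
    Disjoint (ends b) (ends c) → Disjoint (ends b) (ends d) →
    Disjoint (ends b) (ends e) → Disjoint (ends c) (ends d) →
    Disjoint (ends c) (ends e) → Disjoint (ends d) (ends e) →
    ({a,b,c,d,e} : Finset (Fin 15)) = Sl 0 ∨ ({a,b,c,d,e} : Finset (Fin 15)) = Sl 1 ∨
    ({a,b,c,d,e} : Finset (Fin 15)) = Sl 2 ∨ ({a,b,c,d,e} : Finset (Fin 15)) = Sl 3 ∨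
    ({a,b,c,d,e} : Finset (Fin 15)) = Sl 4 ∨ ({a,b,c,d,e} : Finset (Fin 15)) = Sl 5 := by
  intro a b c d e hab hbc hcd hde dab dac dad dae dbc dbd dbe dcd dce dde
  have sab : shareN a.val b.val = false := by rw [shareN_correct, decide_eq_true dab]; rfl
  have sac : shareN a.val c.val = false := by rw [shareN_correct, decide_eq_true dac]; rfl
  have sad : shareN a.val d.val = false := by rw [shareN_correct, decide_eq_true dad]; rfl
  have sae : shareN a.val e.val = false := by rw [shareN_correct, decide_eq_true dae]; rfl
  have sbc : shareN b.val c.val = false := by rw [shareN_correct, decide_eq_true dbc]; rfl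
  have sbd : shareN b.val d.val = false := by rw [shareN_correct, decide_eq_true dbd]; rfl
  have sbe : shareN b.val e.val = false := by rw [shareN_correct, decide_eq_true dbe]; rfl
  have scd : shareN c.val d.val = false := by rw [shareN_correct, decide_eq_true dcd]; rfl
  have sce : shareN c.val e.val = false := by rw [shareN_correct, decide_eq_true dce]; rfl
  have sde : shareN d.val e.val = false := by rw [shareN_correct, decide_eq_true dde]; rfl
  have h1 : chkA a.val = true :=
    List.all_eq_true.mp chk_true _ (List.mem_range.mpr a.isLt)
  have h2 : chkB a.val b.val = true :=
    List.all_eq_true.mp h1 _ (List.mem_range.mpr b.isLt)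
  unfold chkB at h2
  rw [decide_eq_true (show a.val < b.val from hab), sab] at h2
  simp only [Bool.not_true, Bool.false_or] at h2
  have h3 : chkC a.val b.val c.val = true :=
    List.all_eq_true.mp h2 _ (List.mem_range.mpr c.isLt)
  unfold chkC at h3
  rw [decide_eq_true (show b.val < c.val from hbc), sac, sbc] at h3
  simp only [Bool.not_true, Bool.false_or] at h3
  have h4 : chkD a.val b.val c.val d.val = true :=
    List.all_eq_true.mp h3 _ (List.mem_range.mpr d.isLt)
  unfold chkD at h4
  rw [decide_eq_true (show c.val < d.val from hcd), sad, sbd, scd] at h4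
  simp only [Bool.not_true, Bool.false_or] at h4
  have h5 : chkE a.val b.val c.val d.val e.val = true :=
    List.all_eq_true.mp h4 _ (List.mem_range.mpr e.isLt)
  unfold chkE at h5
  rw [decide_eq_true (show d.val < e.val from hde), sae, sbe, sce, sde] at h5
  simp only [Bool.not_true, Bool.false_or] at h5
  unfold chkConcl at h5
  simp only [Bool.or_eq_true, Bool.and_eq_true, beq_iff_eq] at h5
  have fe : ∀ (x : Fin 15) (n : Nat) (y : Fin 15), x.val = n → y.val = n → x = y := by
    intro x n y hx hy; exact Fin.ext (hx.trans hy.symm)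
  rcases h5 with ((((⟨⟨⟨⟨u1,u2⟩,u3⟩,u4⟩,u5⟩|⟨⟨⟨⟨u1,u2⟩,u3⟩,u4⟩,u5⟩)|⟨⟨⟨⟨u1,u2⟩,u3⟩,u4⟩,u5⟩)|⟨⟨⟨⟨u1,u2⟩,u3⟩,u4⟩,u5⟩)|⟨⟨⟨⟨u1,u2⟩,u3⟩,u4⟩,u5⟩)|⟨⟨⟨⟨u1,u2⟩,u3⟩,u4⟩,u5⟩
  · exact Or.inl (by rw [fe a 0 0 u1 rfl, fe b 4 4 u2 rfl, fe c 8 8 u3 rfl,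
      fe d 10 10 u4 rfl, fe e 12 12 u5 rfl]; rfl)
  · refine Or.inr (Or.inl ?_); rw [fe a 0 0 u1 rfl, fe b 5 5 u2 rfl, fe c 7 7 u3 rfl,
      fe d 9 9 u4 rfl, fe e 13 13 u5 rfl]; rfl
  · refine Or.inr (Or.inr (Or.inl ?_)); rw [fe a 1 1 u1 rfl, fe b 3 3 u2 rfl, fe c 7 7 u3 rfl,
      fe d 11 11 u4 rfl, fe e 12 12 u5 rfl]; rfl
  · refine Or.inr (Or.inr (Or.inr (Or.inl ?_))); rw [fe a 1 1 u1 rfl, fe b 5 5 u2 rfl,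
      fe c 6 6 u3 rfl, fe d 10 10 u4 rfl, fe e 14 14 u5 rfl]; rfl
  · refine Or.inr (Or.inr (Or.inr (Or.inr (Or.inl ?_)))); rw [fe a 2 2 u1 rfl, fe b 3 3 u2 rfl,
      fe c 8 8 u3 rfl, fe d 9 9 u4 rfl, fe e 14 14 u5 rfl]; rfl
  · refine Or.inr (Or.inr (Or.inr (Or.inr (Or.inr ?_)))); rw [fe a 2 2 u1 rfl, fe b 4 4 u2 rfl,
      fe c 6 6 u3 rfl, fe d 11 11 u4 rfl, fe e 13 13 u5 rfl]; rfl

def subOfS (S : Finset (Fin 15)) : Petersen.Subgraph where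
  verts := Set.univ
  Adj a b := ∃ i ∈ S, ep i = (a, b) ∨ ep i = (b, a)
  adj_sub := by
    rintro a b ⟨i, -, h | h⟩
    · have h2 := ep_adj i; rw [h] at h2; exact h2
    · have h2 := ep_adj i; rw [h] at h2; exact h2.symm
  edge_vert := fun _ => Set.mem_univ _
  symm := ⟨fun a b ⟨i, hi, h⟩ => ⟨i, hi, h.symm⟩⟩

instance subOfS_dec (S : Finset (Fin 15)) : DecidableRel (subOfS S).Adj := fun a b =>
  decidable_of_iff (∃ i ∈ S, ep i = (a, b) ∨ ep i = (b, a)) Iff.rfl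

def PMk (k : Fin 6) : Petersen.Subgraph := subOfS (Sl k)

instance PMk_dec (k : Fin 6) : DecidableRel (PMk k).Adj := fun a b =>
  inferInstanceAs (Decidable ((subOfS (Sl k)).Adj a b))

lemma PMk_isPM (k : Fin 6) : (PMk k).IsPerfectMatching := by
  have h : ∀ (k : Fin 6) (v : PV), ∃ w, (PMk k).Adj v w ∧ ∀ y, (PMk k).Adj v y → y = w := by
    decide
  refine ⟨fun v _ => ?_, fun v => Set.mem_univ v⟩
  obtain ⟨w, h1, h2⟩ := h k v
  exact ⟨w, h1, h2⟩

lemma thirdFin : ∀ j k : Fin 6, ∃ m : Fin 6, m ≠ j ∧ m ≠ k := by decide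

lemma F : ∀ a b : Fin 6, a ≠ b → ∃ x y : PV, Petersen.Adj x y ∧
    ∀ c : Fin 6, ((PMk c).Adj x y ↔ (c = a ∨ c = b)) := by decide

lemma list_len5 {α : Type*} (l : List α) (h : l.length = 5) :
    ∃ a b c d e, l = [a, b, c, d, e] := by
  rcases l with - | ⟨a, l⟩; · simp at h
  rcases l with - | ⟨b, l⟩; · simp at h
  rcases l with - | ⟨c, l⟩; · simp at h
  rcases l with - | ⟨d, l⟩; · simp at h
  rcases l with - | ⟨e, l⟩; · simp at h
  rcases l with - | ⟨f, l⟩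
  · exact ⟨a, b, c, d, e, rfl⟩
  · simp at h

lemma pm_eq_PMk (M : Petersen.Subgraph) (hM : M.IsPerfectMatching) : ∃ k : Fin 6, M = PMk k := by
  classical
  obtain ⟨hmat, hspan⟩ := hM
  have hex : ∀ v : PV, ∃ w, M.Adj v w ∧ ∀ y, M.Adj v y → y = w := by
    intro v; obtain ⟨w, hw, hu⟩ := hmat (hspan v); exact ⟨w, hw, hu⟩
  choose pf hpf1 hpf2 using hex
  have hinv : ∀ v, pf (pf v) = v := fun v => (hpf2 (pf v) v (hpf1 v).symm).symm
  have hPadj : ∀ v, Petersen.Adj v (pf v) := fun v => M.adj_sub (hpf1 v)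
  have hMadj : ∀ a b, M.Adj a b ↔ pf a = b :=
    fun a b => ⟨fun h => (hpf2 a b h).symm, fun h => h ▸ hpf1 a⟩
  have hc : ∀ v : PV, ∃ i : Fin 15, ep i = (v, pf v) ∨ ep i = (pf v, v) :=
    fun v => ep_ex v (pf v) (hPadj v)
  choose c hcspec using hc
  have hends : ∀ v, ends (c v) = {v, pf v} := by
    intro v
    rcases hcspec v with h | h
    · show ({(ep (c v)).1, (ep (c v)).2} : Finset PV) = _
      rw [h]
    · show ({(ep (c v)).1, (ep (c v)).2} : Finset PV) = _
      rw [h]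
      exact Finset.pair_comm _ _
  have key : ∀ v w x : PV, (x = v ∨ x = pf v) → (x = w ∨ x = pf w) →
      ({v, pf v} : Finset PV) = {w, pf w} := by
    intro v w x h1 h2
    have hflip : ∀ z : PV, ({pf z, pf (pf z)} : Finset PV) = {z, pf z} := by
      intro z; rw [hinv]; exact Finset.pair_comm _ _
    rcases h1 with rfl | rfl
    · rcases h2 with rfl | h2
      · rfl
      · have hw : w = pf x := by rw [h2, hinv]
        subst hw; exact (hflip x).symm
    · rcases h2 with h2 | h2
      · subst h2; exact (hflip v).symm
      · have : v = w := by
          have := congrArg pf h2; rwa [hinv, hinv] at this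
        rw [this]
  have hpairs : ∀ v w : PV, ¬ Disjoint (ends (c v)) (ends (c w)) → c v = c w := by
    intro v w hnd
    apply ends_inj
    rw [hends v, hends w] at hnd ⊢
    obtain ⟨x, hxv, hxw⟩ := Finset.not_disjoint_iff.mp hnd
    have h1 : x = v ∨ x = pf v := by
      rcases Finset.mem_insert.mp hxv with h | h
      exacts [Or.inl h, Or.inr (Finset.mem_singleton.mp h)]
    have h2 : x = w ∨ x = pf w := by
      rcases Finset.mem_insert.mp hxw with h | h
      exacts [Or.inl h, Or.inr (Finset.mem_singleton.mp h)]
    exact key v w x h1 h2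
  set S : Finset (Fin 15) := Finset.univ.image c with hSdef
  have hmemS : ∀ i ∈ S, ∃ v, c v = i := by
    intro i hi; obtain ⟨v, -, h⟩ := Finset.mem_image.mp hi; exact ⟨v, h⟩
  have hcS : ∀ v, c v ∈ S := fun v => Finset.mem_image_of_mem c (Finset.mem_univ v)
  have hfib : ∀ v₀, Finset.univ.filter (fun v => c v = c v₀) = {v₀, pf v₀} := by
    intro v₀
    ext w
    simp only [Finset.mem_filter, Finset.mem_univ, true_and, Finset.mem_insert,
      Finset.mem_singleton]
    constructor
    · intro h
      have hw : w ∈ ends (c v₀) := by rw [← h, hends]; exact Finset.mem_insert_self _ _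
      rw [hends v₀] at hw
      rcases Finset.mem_insert.mp hw with h' | h'
      exacts [Or.inl h', Or.inr (Finset.mem_singleton.mp h')]
    · intro h
      apply ends_inj
      rw [hends w, hends v₀]
      rcases h with rfl | rfl
      · rfl
      · exact key (pf v₀) v₀ (pf v₀) (Or.inl rfl) (Or.inr rfl)
  have hfiber : ∀ i ∈ S, (Finset.univ.filter (fun v => c v = i)).card = 2 := by
    intro i hi
    obtain ⟨v₀, rfl⟩ := hmemS i hi
    rw [hfib v₀, Finset.card_pair (hPadj v₀).ne]
  have hcard10 : (Finset.univ : Finset PV).card = 10 := by decide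
  have hcardS : S.card = 5 := by
    have h10 := Finset.card_eq_sum_card_fiberwise
      (f := c) (s := (Finset.univ : Finset PV)) (t := S) (fun v _ => hcS v)
    rw [hcard10, Finset.sum_congr rfl hfiber, Finset.sum_const, smul_eq_mul] at h10
    omega
  have hdisjS : ∀ i ∈ S, ∀ j ∈ S, i ≠ j → Disjoint (ends i) (ends j) := by
    intro i hi j hj hij
    obtain ⟨v, rfl⟩ := hmemS i hi
    obtain ⟨w, rfl⟩ := hmemS j hj
    by_contra hnd
    exact hij (hpairs v w hnd)
  -- sort S
  have hlen : (S.sort (· ≤ ·)).length = 5 := by rw [Finset.length_sort]; exact hcardS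
  obtain ⟨a, b, c', d, e, hL⟩ := list_len5 _ hlen
  have hsorted := (Finset.sortedLT_sort S).pairwise
  rw [hL] at hsorted
  simp only [List.pairwise_cons, List.mem_cons, List.mem_singleton, List.not_mem_nil,
    List.Pairwise.nil, and_true, forall_eq_or_imp, forall_eq, or_false] at hsorted
  have htf := Finset.sort_toFinset S (· ≤ ·)
  rw [hL] at htf
  have hSet : S = ({a, b, c', d, e} : Finset (Fin 15)) := by
    rw [← htf]; simp [List.toFinset_cons, List.toFinset_nil]
  have hmem : a ∈ S ∧ b ∈ S ∧ c' ∈ S ∧ d ∈ S ∧ e ∈ S := by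
    rw [hSet]; refine ⟨?_, ?_, ?_, ?_, ?_⟩ <;> simp
  obtain ⟨ha, hb, hc'', hd, he⟩ := hmem
  obtain ⟨⟨hab, hac, had, hae⟩, ⟨hbc, hbd, hbe⟩, ⟨hcd, hce⟩, hde, -⟩ := hsorted
  have HCLS := CLS5 a b c' d e hab hbc hcd hde
    (hdisjS a ha b hb hab.ne) (hdisjS a ha c' hc'' hac.ne) (hdisjS a ha d hd had.ne)
    (hdisjS a ha e he hae.ne) (hdisjS b hb c' hc'' hbc.ne) (hdisjS b hb d hd hbd.ne)
    (hdisjS b hb e he hbe.ne) (hdisjS c' hc'' d hd hcd.ne) (hdisjS c' hc'' e he hce.ne)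
    (hdisjS d hd e he hde.ne)
  have hSk : ∃ k : Fin 6, S = Sl k := by
    rcases HCLS with h | h | h | h | h | h
    exacts [⟨0, hSet.trans h⟩, ⟨1, hSet.trans h⟩, ⟨2, hSet.trans h⟩, ⟨3, hSet.trans h⟩,
      ⟨4, hSet.trans h⟩, ⟨5, hSet.trans h⟩]
  obtain ⟨k, hk⟩ := hSk
  refine ⟨k, ?_⟩
  have hMS : M = subOfS S := by
    apply SimpleGraph.Subgraph.ext
    · exact Set.eq_univ_of_forall hspan
    · funext x y
      apply propext
      constructor
      · intro h
        have hp : pf x = y := (hMadj x y).mp h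
        refine ⟨c x, hcS x, ?_⟩
        rw [← hp]
        exact hcspec x
      · rintro ⟨i, hi, hor⟩
        obtain ⟨v, rfl⟩ := hmemS i hi
        rcases hcspec v with h1 | h1 <;> rcases hor with h2 | h2 <;>
          · have h3 := h1.symm.trans h2
            rw [Prod.mk.injEq] at h3
            obtain ⟨h4, h5⟩ := h3
            rw [hMadj, ← h4, ← h5]
            all_goals exact hinv v
  rw [hMS, hk]; rfl

open scoped Classical

/-- The edge/perfect-matching incidence matrix of the Petersen graph, with rows
indexed by the 15 edges and columns by the 6 perfect matchings, over `ℝ`. -/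
noncomputable def incMatR (eE : Fin 15 ≃ Petersen.edgeSet)
    (eM : Fin 6 ≃ {M : Petersen.Subgraph // M.IsPerfectMatching}) :
    Matrix (Fin 15) (Fin 6) ℝ :=
  fun i j => if (eE i : Sym2 _) ∈ (eM j).1.edgeSet then 1 else 0

/-- The only integer points in the convex hull of the 6 columns of the
edge/matching incidence matrix of the Petersen graph are the columns themselves. -/
theorem stmt7 (eE : Fin 15 ≃ Petersen.edgeSet)
    (eM : Fin 6 ≃ {M : Petersen.Subgraph // M.IsPerfectMatching}) :
    {v : Fin 15 → ℝ | v ∈ convexHull ℝ (Set.range fun j i => incMatR eE eM i j) ∧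
        ∀ i, ∃ n : ℤ, v i = (n : ℝ)} =
      Set.range (fun j i => incMatR eE eM i j) := by
  set g : Fin 6 → (Fin 15 → ℝ) := fun j i => incMatR eE eM i j with hg
  have hval : ∀ i j, g j i = incMatR eE eM i j := fun i j => rfl
  have hone : ∀ i j, (eE i : Sym2 PV) ∈ (eM j).1.edgeSet → g j i = 1 := by
    intro i j h; rw [hval]; simp only [incMatR]; rw [if_pos h]
  have hzero : ∀ i j, (eE i : Sym2 PV) ∉ (eM j).1.edgeSet → g j i = 0 := by
    intro i j h; rw [hval]; simp only [incMatR]; rw [if_neg h]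
  -- classification of the matchings
  have hclass : ∀ l : Fin 6, ∃ k, (eM l).1 = PMk k := fun l => pm_eq_PMk _ (eM l).2
  choose cIdx hcIdx using hclass
  have hcInj : Function.Injective cIdx := by
    intro l l' h
    exact eM.injective (Subtype.ext (by rw [hcIdx l, hcIdx l', h]))
  have fact1 : ∀ j k : Fin 6, j ≠ k → ∃ i : Fin 15,
      ∀ l : Fin 6, ((eE i : Sym2 PV) ∈ (eM l).1.edgeSet ↔ (l = j ∨ l = k)) := by
    intro j k hjk
    obtain ⟨x, y, hxy, hall⟩ := F (cIdx j) (cIdx k) (fun h => hjk (hcInj h))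
    refine ⟨eE.symm ⟨s(x, y), (Petersen.mem_edgeSet).mpr hxy⟩, ?_⟩
    intro l
    rw [Equiv.apply_symm_apply]
    show s(x, y) ∈ (eM l).1.edgeSet ↔ _
    rw [SimpleGraph.Subgraph.mem_edgeSet, hcIdx l, hall (cIdx l)]
    constructor
    · rintro (h | h)
      exacts [Or.inl (hcInj h), Or.inr (hcInj h)]
    · rintro (rfl | rfl)
      exacts [Or.inl rfl, Or.inr rfl]
  have hginj : Function.Injective g := by
    intro j k hjk
    by_contra hne
    obtain ⟨m, hmj, hmk⟩ := thirdFin j k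
    obtain ⟨i, hi⟩ := fact1 j m (fun h => hmj h.symm)
    have h1 : g j i = 1 := hone i j ((hi j).mpr (Or.inl rfl))
    have h0 : g k i = 0 := by
      refine hzero i k (fun hm => ?_)
      rcases (hi k).mp hm with h | h
      exacts [hne h.symm, hmk h.symm]
    rw [congrFun hjk i, h0] at h1
    norm_num at h1
  apply Set.Subset.antisymm
  · rintro v ⟨hhull, hint⟩
    have hrange : Set.range g = ↑(Finset.univ.image g) := by
      rw [Finset.coe_image, Finset.coe_univ, Set.image_univ]
    rw [hrange] at hhull
    obtain ⟨w, hw0, hw1, hwsum⟩ := Finset.mem_convexHull'.mp hhull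
    set u : Fin 6 → ℝ := fun j => w (g j) with hu
    have hinj' : ∀ x ∈ (Finset.univ : Finset (Fin 6)), ∀ y ∈ Finset.univ, g x = g y → x = y :=
      fun x _ y _ h => hginj h
    have hsum_u : ∑ j, u j = 1 := by rw [← hw1, Finset.sum_image hinj']
    have hcomb : ∑ j, u j • g j = v := by rw [← hwsum, Finset.sum_image hinj']
    have hu0 : ∀ j, 0 ≤ u j := fun j => hw0 _ (Finset.mem_image_of_mem g (Finset.mem_univ j))
    have hvi : ∀ i, v i = ∑ j, u j * g j i := by
      intro i
      rw [← hcomb, Finset.sum_apply]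
      exact Finset.sum_congr rfl (fun j _ => by rw [Pi.smul_apply, smul_eq_mul])
    have hpair : ∀ j k : Fin 6, j ≠ k → ∃ i, v i = u j + u k := by
      intro j k hjk
      obtain ⟨i, hi⟩ := fact1 j k hjk
      refine ⟨i, ?_⟩
      rw [hvi i]
      have hterm : ∀ l, u l * g l i = if l = j ∨ l = k then u l else 0 := by
        intro l
        by_cases h : l = j ∨ l = k
        · rw [if_pos h, hone i l ((hi l).mpr h), mul_one]
        · rw [if_neg h, hzero i l (fun hm => h ((hi l).mp hm)), mul_zero]
      rw [Finset.sum_congr rfl (fun l _ => hterm l), ← Finset.sum_filter]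
      have hfil : Finset.univ.filter (fun l => l = j ∨ l = k) = {j, k} := by
        ext l
        simp [Finset.mem_insert, Finset.mem_singleton]
      rw [hfil, Finset.sum_pair hjk]
    have pair_le : ∀ j k : Fin 6, j ≠ k → u j + u k ≤ 1 := by
      intro j k hjk
      have hsub : ({j, k} : Finset (Fin 6)).sum u ≤ ∑ l, u l :=
        Finset.sum_le_sum_of_subset_of_nonneg (Finset.subset_univ _) (fun l _ _ => hu0 l)
      rw [Finset.sum_pair hjk, hsum_u] at hsub
      exact hsub
    have hint' : ∀ j k : Fin 6, j ≠ k → ∃ n : ℤ, u j + u k = n := by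
      intro j k hjk
      obtain ⟨i, hi⟩ := hpair j k hjk
      obtain ⟨n, hn⟩ := hint i
      exact ⟨n, by rw [← hi, hn]⟩
    have honepos : ∀ j k : Fin 6, j ≠ k → 0 < u j → ¬ (0 < u k) := by
      intro j k hjk hj hk
      obtain ⟨m, hmj, hmk⟩ := thirdFin j k
      obtain ⟨n1, hn1⟩ := hint' j k hjk
      have h01 : u j + u k = 1 := by
        have hpos : (0:ℝ) < n1 := by rw [← hn1]; exact add_pos hj hk
        have hle : (n1:ℝ) ≤ 1 := by rw [← hn1]; exact pair_le j k hjk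
        have hn11 : n1 = 1 := by
          have h1 : 0 < n1 := by exact_mod_cast hpos
          have h2 : n1 ≤ 1 := by exact_mod_cast hle
          omega
        rw [hn1, hn11, Int.cast_one]
      have hm0 : u m = 0 := by
        have hsub : ({j, k, m} : Finset (Fin 6)).sum u ≤ 1 := by
          rw [← hsum_u]
          exact Finset.sum_le_sum_of_subset_of_nonneg (Finset.subset_univ _) (fun l _ _ => hu0 l)
        have hnotin : j ∉ ({k, m} : Finset (Fin 6)) := by
          simp only [Finset.mem_insert, Finset.mem_singleton]
          rintro (h | h)
          exacts [hjk h, hmj h.symm]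
        rw [Finset.sum_insert hnotin, Finset.sum_pair (fun h => hmk h.symm)] at hsub
        have := hu0 m
        linarith
      obtain ⟨n2, hn2⟩ := hint' j m (fun h => hmj h.symm)
      have hp1 : (0:ℝ) < n2 := by rw [← hn2, hm0, add_zero]; exact hj
      have hp2 : (n2:ℝ) < 1 := by
        rw [← hn2, hm0, add_zero]
        linarith
      have h1 : 0 < n2 := by exact_mod_cast hp1
      have h2 : n2 < 1 := by exact_mod_cast hp2
      omega
    have hexpos : ∃ j, 0 < u j := by
      by_contra h
      push_neg at h
      have : ∑ j, u j ≤ 0 := Finset.sum_nonpos (fun j _ => h j)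
      rw [hsum_u] at this
      linarith
    obtain ⟨j, hj⟩ := hexpos
    have hz : ∀ l, l ≠ j → u l = 0 := by
      intro l hl
      by_contra h
      exact honepos j l (fun h' => hl h'.symm) hj (lt_of_le_of_ne (hu0 l) (Ne.symm h))
    have hj1 : u j = 1 := by
      have hs := Finset.sum_eq_single (s := (Finset.univ : Finset (Fin 6))) (f := u) j
        (fun l _ hl => hz l hl) (fun h => absurd (Finset.mem_univ j) h)
      rw [← hs, hsum_u]
    refine ⟨j, ?_⟩
    funext i
    have hs := Finset.sum_eq_single (s := (Finset.univ : Finset (Fin 6)))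
      (f := fun l => u l * g l i) j
      (fun l _ hl => by show u l * g l i = 0; rw [hz l hl, zero_mul])
      (fun h => absurd (Finset.mem_univ j) h)
    show g j i = v i
    rw [hvi i, hs]
    show g j i = u j * g j i
    rw [hj1, one_mul]
  · rintro v ⟨j, rfl⟩
    refine ⟨subset_convexHull ℝ _ ⟨j, rfl⟩, ?_⟩
    intro i
    by_cases h : (eE i : Sym2 PV) ∈ (eM j).1.edgeSet
    · exact ⟨1, by rw [hone i j h]; norm_num⟩
    · exact ⟨0, by rw [hzero i j h]; norm_num⟩
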